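/- Let p : E ⥤ B be a Grothendieck fibration between categories, each with a terminal object, such that p preserves the terminal object. Then p admits a fully faithful right adjoint (i.e. p is a reflective localization functor). -/
import Mathlib


open CategoryTheory CategoryTheory.Limits

def StronglyCartesian {E B : Type*} [Category E] [Category B] (p : E ⥤ B)
    {x' x : E} (f : x' ⟶ x) : Prop :=
  ∀ {z : E} (g : z ⟶ x) (h : p.obj z ⟶ p.obj x'),
    p.map g = h ≫ p.map f → ∃! k : z ⟶ x', p.map k = h ∧ k ≫ f = g

def GrothFibration {E B : Type*} [Category E] [Category B] (p : E ⥤ B) : Prop :=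
  ∀ (x : E) {b : B} (h : b ⟶ p.obj x), ∃ (x' : E) (f : x' ⟶ x) (e : p.obj x' = b),
    StronglyCartesian p f ∧ p.map f = eqToHom e ≫ h

/-- A Grothendieck fibration between categories with terminal objects which preserves
the terminal object admits a fully faithful right adjoint (it is a reflective
localization). -/
theorem pointed_fibration_is_localization {E B : Type*} [Category E] [Category B]
    [HasTerminal E] [HasTerminal B]
    (p : E ⥤ B) (hp : GrothFibration p) (ht : IsTerminal (p.obj (⊤_ E))) :
    ∃ i : B ⥤ E, i.Full ∧ i.Faithful ∧ Nonempty (p ⊣ i) := by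
  -- choose cartesian lifts of terminal maps
  choose x f e cart _ using fun b : B => hp (⊤_ E) (ht.from b)
  -- key: unique lift property
  have key : ∀ (z : E) (b : B) (h : p.obj z ⟶ b),
      ∃! k : z ⟶ x b, p.map k = h ≫ eqToHom (e b).symm := by
    intro z b h
    obtain ⟨k, ⟨hk1, _⟩, hk3⟩ := cart b (terminal.from z) (h ≫ eqToHom (e b).symm)
      (ht.hom_ext _ _)
    exact ⟨k, hk1, fun k' hk' => hk3 k' ⟨hk', Subsingleton.elim _ _⟩⟩
  choose lift hlift0 ulift0 using key
  have hlift : ∀ (z : E) (b : B) (h : p.obj z ⟶ b),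
      p.map (lift z b h) = h ≫ eqToHom (e b).symm := hlift0
  have ulift : ∀ (z : E) (b : B) (h : p.obj z ⟶ b) (k : z ⟶ x b),
      p.map k = h ≫ eqToHom (e b).symm → k = lift z b h := ulift0
  let eq : ∀ (z : E) (b : B), (p.obj z ⟶ b) ≃ (z ⟶ x b) := fun z b =>
    { toFun := lift z b
      invFun := fun k => p.map k ≫ eqToHom (e b)
      left_inv := fun h => by dsimp only; rw [hlift]; simp
      right_inv := fun k => by
        refine (ulift z b _ k ?_).symm
        simp }
  have heq : ∀ (z b h), p.map (eq z b h) = h ≫ eqToHom (e b).symm := hlift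
  have he : ∀ (z' z : E) (b : B) (w : z' ⟶ z) (h : p.obj z ⟶ b),
      eq z' b (p.map w ≫ h) = w ≫ eq z b h := by
    intro z' z b w h
    refine (ulift z' b _ _ ?_).symm
    show p.map (w ≫ eq z b h) = _
    rw [p.map_comp, heq]; simp
  have hcounit : IsIso (Adjunction.adjunctionOfEquivRight eq he).counit := by
    have : ∀ b, IsIso ((Adjunction.adjunctionOfEquivRight eq he).counit.app b) := by
      intro b
      have : (Adjunction.adjunctionOfEquivRight eq he).counit.app b = eqToHom (e b) := by
        simp only [Adjunction.adjunctionOfEquivRight, Adjunction.mkOfHomEquiv_counit_app]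
        refine ((eq _ b).symm_apply_eq).mpr ?_
        exact ulift _ b _ (𝟙 _) (by simp)
      rw [this]; infer_instance
    exact NatIso.isIso_of_isIso_app _
  exact ⟨Adjunction.rightAdjointOfEquiv eq he,
    ((Adjunction.adjunctionOfEquivRight eq he).fullyFaithfulROfIsIsoCounit).full,
    ((Adjunction.adjunctionOfEquivRight eq he).fullyFaithfulROfIsIsoCounit).faithful,
    ⟨Adjunction.adjunctionOfEquivRight eq he⟩⟩
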